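/- Let G be a connected, locally finite, quasi-transitive graph, let ρ be a fixed vertex of G, and let p ∈ [0,1] be such that the expected cluster size is finite, i.e. Σ_{x∈V} τ_p(ρ,x) < ∞. Then sup_{n≥1} (κ_p(n))^{1/n} = lim_{n→∞} (κ_p(n))^{1/n} ≤ gr(G)^{-1}. -/

import Mathlib

open MeasureTheory Filter Topology

noncomputable section

namespace BernoulliPercolation

variable {V : Type*}

/-- The spanning subgraph of the retained (open) edges of a configuration `ω`:
edge `e` of `G` is retained iff `ω e = true`. -/
def openSubgraph (G : SimpleGraph V) (ω : G.edgeSet → Bool) : SimpleGraph V :=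
  SimpleGraph.fromEdgeSet {e : Sym2 V | ∃ he : e ∈ G.edgeSet, ω ⟨e, he⟩ = true}

/-- The event that `x` and `y` are connected in the percolation configuration. -/
def connEvent (G : SimpleGraph V) (x y : V) : Set (G.edgeSet → Bool) :=
  {ω | (openSubgraph G ω).Reachable x y}

/-- The event that `x` and `y` are joined by an open path of length at most `r`. -/
def connEventLe (G : SimpleGraph V) (x y : V) (r : ℕ) : Set (G.edgeSet → Bool) :=
  {ω | ∃ w : (openSubgraph G ω).Walk x y, w.IsPath ∧ w.length ≤ r}

/-- `μ` is Bernoulli bond percolation on `G` with retention parameter `p`: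
the states of the edges are independent, and each edge is retained (open) with
probability `p` and deleted with probability `1 - p`. -/
def IsBernoulli (G : SimpleGraph V) (p : ℝ) (μ : Measure (G.edgeSet → Bool)) : Prop :=
  ∀ (S : Finset G.edgeSet) (f : G.edgeSet → Bool),
    μ {ω | ∀ e ∈ S, ω e = f e} =
      ∏ e ∈ S, (if f e then ENNReal.ofReal p else ENNReal.ofReal (1 - p))

/-- The two-point (connection) probability `τ(x,y)`. -/
def tau (G : SimpleGraph V) (μ : Measure (G.edgeSet → Bool)) (x y : V) : ℝ :=
  (μ (connEvent G x y)).toReal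

/-- `τ^r(x,y)`: the probability that `x` and `y` are joined by an open path of
length at most `r`. -/
def tauLe (G : SimpleGraph V) (μ : Measure (G.edgeSet → Bool)) (x y : V) (r : ℕ) : ℝ :=
  (μ (connEventLe G x y r)).toReal

/-- `κ(n) = inf {τ(x,y) : d(x,y) ≤ n}`. -/
def kappa (G : SimpleGraph V) (μ : Measure (G.edgeSet → Bool)) (n : ℕ) : ℝ :=
  sInf {t : ℝ | ∃ x y : V, G.dist x y ≤ n ∧ t = tau G μ x y}

/-- The cluster of the vertex `x` in the configuration `ω`. -/
def cluster (G : SimpleGraph V) (ω : G.edgeSet → Bool) (x : V) : Set V :=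
  {y | (openSubgraph G ω).Reachable x y}

/-- The configuration `ω` has no infinite clusters. -/
def NoInfiniteCluster (G : SimpleGraph V) (ω : G.edgeSet → Bool) : Prop :=
  ∀ x : V, (cluster G ω x).Finite

/-- The configuration `ω` has a unique infinite cluster. -/
def UniqueInfiniteCluster (G : SimpleGraph V) (ω : G.edgeSet → Bool) : Prop :=
  ∃! c : (openSubgraph G ω).ConnectedComponent, c.supp.Infinite

/-- The critical probability `p_c`, for a family `μ p` of percolation measures. -/
def pc (G : SimpleGraph V) (μ : ℝ → Measure (G.edgeSet → Bool)) : ℝ :=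
  sSup {p : ℝ | p ∈ Set.Icc (0:ℝ) 1 ∧ μ p {ω | NoInfiniteCluster G ω} = 1}

/-- `G` is quasi-transitive: the action of `Aut(G)` on `V` has finitely many orbits. -/
def QuasiTransitive (G : SimpleGraph V) : Prop :=
  ∃ S : Finset V, ∀ x : V, ∃ y ∈ S, ∃ γ : G ≃g G, γ y = x

/-- The graph-distance ball of radius `r` about `x`. -/
def ball (G : SimpleGraph V) (x : V) (r : ℕ) : Set V :=
  {y : V | G.dist x y ≤ r}

/-- The exponential growth rate `gr(G) = liminf |B(x,r)|^{1/r}` of `G`, seen from `x`. -/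
def growth (G : SimpleGraph V) (x : V) : ℝ :=
  Filter.liminf (fun r : ℕ => ((ball G x r).ncard : ℝ) ^ ((r : ℝ)⁻¹)) Filter.atTop

/-- `G` has exponential growth: `gr(G) > 1`. -/
def ExponentialGrowth (G : SimpleGraph V) : Prop :=
  ∀ x : V, 1 < growth G x

/-- `sup_{n ≥ 1} κ(n)^{1/n}`. -/
def supKappaRoot (G : SimpleGraph V) (μ : Measure (G.edgeSet → Bool)) : ℝ :=
  sSup {t : ℝ | ∃ n : ℕ, 1 ≤ n ∧ t = kappa G μ n ^ ((n : ℝ)⁻¹)}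

section Aux
open ENNReal
open scoped Classical

variable {ι : Type*}

/-- weight of a state -/
def wt (p : ℝ) : Bool → ℝ≥0∞
  | true => ENNReal.ofReal p
  | false => ENNReal.ofReal (1 - p)

/-- abstract Bernoulli product measure property -/
def IsBern (p : ℝ) (μ : Measure (ι → Bool)) : Prop :=
  ∀ (S : Finset ι) (f : ι → Bool), μ {ω | ∀ e ∈ S, ω e = f e} = ∏ e ∈ S, wt p (f e)

/-- increasing event -/
def Incr (A : Set (ι → Bool)) : Prop := ∀ ⦃ω ω' : ι → Bool⦄, ω ≤ ω' → ω ∈ A → ω' ∈ A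

/-- event supported on a finite set of coordinates -/
def SuppOn (S : Finset ι) (A : Set (ι → Bool)) : Prop :=
  ∀ ⦃ω ω' : ι → Bool⦄, (∀ e ∈ S, ω e = ω' e) → ω ∈ A → ω' ∈ A

variable {p : ℝ} {μ : Measure (ι → Bool)}

lemma IsBern.measure_univ (h : IsBern p μ) : μ Set.univ = 1 := by
  have := h ∅ (fun _ => true)
  simpa using this

lemma IsBern.le_one (h : IsBern p μ) (A : Set (ι → Bool)) : μ A ≤ 1 := by
  rw [← h.measure_univ]; exact measure_mono (Set.subset_univ _)

lemma IsBern.ne_top (h : IsBern p μ) (A : Set (ι → Bool)) : μ A ≠ ⊤ :=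
  fun ht => by simpa [ht] using h.le_one A

lemma wt_add (hp : p ∈ Set.Icc (0:ℝ) 1) : wt p true + wt p false = 1 := by
  show ENNReal.ofReal p + ENNReal.ofReal (1 - p) = 1
  rw [← ENNReal.ofReal_add hp.1 (by linarith [hp.2])]
  norm_num

lemma measurableSet_coord (e : ι) (b : Bool) : MeasurableSet {ω : ι → Bool | ω e = b} := by
  have : {ω : ι → Bool | ω e = b} = (fun ω : ι → Bool => ω e) ⁻¹' {b} := rfl
  rw [this]
  exact (measurable_pi_apply e) (measurableSet_singleton b)

/-- extension of a partial configuration by `false` -/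
def extFun (S : Finset ι) (g : {x // x ∈ S} → Bool) : ι → Bool :=
  fun e => if h : e ∈ S then g ⟨e, h⟩ else false

lemma extFun_mem {S : Finset ι} (g : {x // x ∈ S} → Bool) {e : ι} (he : e ∈ S) :
    extFun S g e = g ⟨e, he⟩ := dif_pos he

def atom (S : Finset ι) (g : {x // x ∈ S} → Bool) : Set (ι → Bool) :=
  {ω | ∀ e ∈ S, ω e = extFun S g e}

lemma measurableSet_atom (S : Finset ι) (g : {x // x ∈ S} → Bool) :
    MeasurableSet (atom S g) := by
  have : atom S g = ⋂ e ∈ S, {ω : ι → Bool | ω e = extFun S g e} := by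
    ext ω; simp [atom]
  rw [this]
  exact MeasurableSet.biInter S.countable_toSet fun e _ => measurableSet_coord e _

lemma cover_of_suppOn {S : Finset ι} {E : Set (ι → Bool)} (hS : SuppOn S E) :
    E = ⋃ g ∈ Finset.univ.filter (fun g : {x // x ∈ S} → Bool => extFun S g ∈ E), atom S g := by
  ext ω
  simp only [Set.mem_iUnion, Finset.mem_filter, Finset.mem_univ, true_and]
  constructor
  · intro hω
    refine ⟨fun e => ω e, ?_, ?_⟩
    · exact hS (fun e he => (extFun_mem (fun x : {x // x ∈ S} => ω x.1) he).symm) hω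
    · intro e he; exact (extFun_mem (fun x : {x // x ∈ S} => ω x.1) he).symm
  · rintro ⟨g, hg, hω⟩
    exact hS (fun e he => ((hω e he).symm : extFun S g e = ω e)) hg

lemma pairwiseDisjoint_atom (S : Finset ι) (s : Finset ({x // x ∈ S} → Bool)) :
    (↑s : Set _).PairwiseDisjoint (atom S) := by
  intro g _ g' _ hne
  refine Set.disjoint_left.2 fun ω hω hω' => hne ?_
  funext e
  have h1 := hω e.1 e.2
  have h2 := hω' e.1 e.2
  rw [extFun_mem g e.2] at h1
  rw [extFun_mem g' e.2] at h2
  rw [h1] at h2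
  exact h2

lemma measure_suppOn_eq_sum (h : IsBern p μ) {S : Finset ι} {E : Set (ι → Bool)}
    (hS : SuppOn S E) :
    μ E = ∑ g ∈ Finset.univ.filter (fun g : {x // x ∈ S} → Bool => extFun S g ∈ E),
      μ (atom S g) := by
  conv_lhs => rw [cover_of_suppOn hS]
  exact measure_biUnion_finset (pairwiseDisjoint_atom S _) fun g _ => measurableSet_atom S g

lemma measure_atom (h : IsBern p μ) (S : Finset ι) (g : {x // x ∈ S} → Bool) :
    μ (atom S g) = ∏ e ∈ S, wt p (extFun S g e) := h S (extFun S g)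

lemma measure_atom_inter (h : IsBern p μ) {S : Finset ι} {a : ι} (ha : a ∉ S)
    (g : {x // x ∈ S} → Bool) (b : Bool) :
    μ (atom S g ∩ {ω | ω a = b}) = wt p b * μ (atom S g) := by
  have hset : atom S g ∩ {ω | ω a = b}
      = {ω | ∀ e ∈ insert a S, ω e = Function.update (extFun S g) a b e} := by
    ext ω
    simp only [atom, Set.mem_inter_iff, Set.mem_setOf_eq, Finset.mem_insert]
    constructor
    · rintro ⟨h1, h2⟩ e he
      rcases he with rfl | he
      · simpa using h2
      · rw [Function.update_of_ne (fun hea : e = a => ha (by rwa [← hea])) _ _]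
        exact h1 e he
    · intro hω
      refine ⟨fun e he => ?_, ?_⟩
      · have := hω e (Or.inr he)
        rwa [Function.update_of_ne (fun hea : e = a => ha (by rwa [← hea])) _ _] at this
      · simpa using hω a (Or.inl rfl)
  rw [hset, h (insert a S) _, Finset.prod_insert ha, Function.update_self,
    measure_atom h S g]
  congr 1
  refine Finset.prod_congr rfl fun e he => ?_
  rw [Function.update_of_ne (fun hea : e = a => ha (by rwa [← hea])) _ _]

/-- splitting / independence lemma -/
lemma measure_inter_coord (h : IsBern p μ) {S : Finset ι} {E : Set (ι → Bool)}
    (hS : SuppOn S E) {a : ι} (ha : a ∉ S) (b : Bool) :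
    μ (E ∩ {ω | ω a = b}) = wt p b * μ E := by
  have cover2 : E ∩ {ω | ω a = b}
      = ⋃ g ∈ Finset.univ.filter (fun g : {x // x ∈ S} → Bool => extFun S g ∈ E),
          (atom S g ∩ {ω | ω a = b}) := by
    conv_lhs => rw [cover_of_suppOn hS]
    ext ω
    simp only [Set.mem_inter_iff, Set.mem_iUnion]
    tauto
  rw [cover2, measure_biUnion_finset
      (fun g hg => fun g' hg' hne => ((pairwiseDisjoint_atom S _) hg hg' hne).mono
        Set.inter_subset_left Set.inter_subset_left)
      (fun g _ => (measurableSet_atom S g).inter (measurableSet_coord a b))]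
  rw [measure_suppOn_eq_sum h hS, Finset.mul_sum]
  exact Finset.sum_congr rfl fun g _ => measure_atom_inter h ha g b

lemma rearrange {a a' b b' : ℝ≥0∞} (ha : a ≤ a') (hb : b ≤ b') :
    a' * b + a * b' ≤ a' * b' + a * b := by
  obtain ⟨c, rfl⟩ := exists_add_of_le ha
  obtain ⟨d, rfl⟩ := exists_add_of_le hb
  have : (a + c) * (b + d) + a * b = (a + c) * b + a * (b + d) + c * d := by ring
  rw [this]
  exact le_self_add

lemma harris_supported (h : IsBern p μ) (hp : p ∈ Set.Icc (0:ℝ) 1) :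
    ∀ (S : Finset ι) (A B : Set (ι → Bool)), MeasurableSet A → MeasurableSet B →
      Incr A → Incr B → SuppOn S A → SuppOn S B → μ A * μ B ≤ μ (A ∩ B) := by
  intro S
  induction S using Finset.induction_on with
  | empty =>
    intro A B _ _ _ _ hSA hSB
    rcases A.eq_empty_or_nonempty with rfl | ⟨ω₀, hω₀⟩
    · simp
    rcases B.eq_empty_or_nonempty with rfl | ⟨ω₁, hω₁⟩
    · simp
    have hA : A = Set.univ := Set.eq_univ_of_forall fun ω =>
      hSA (fun e he => absurd he (Finset.notMem_empty e)) hω₀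
    have hB : B = Set.univ := Set.eq_univ_of_forall fun ω =>
      hSB (fun e he => absurd he (Finset.notMem_empty e)) hω₁
    subst hA; subst hB
    rw [Set.univ_inter, h.measure_univ, one_mul]
  | @insert a S ha IH =>
    intro A B hmA hmB hiA hiB hSA hSB
    -- restricted events
    set uf : Bool → (ι → Bool) → (ι → Bool) := fun b ω => Function.update ω a b with huf
    have hufm : ∀ b, Measurable (uf b) := by
      intro b
      apply measurable_pi_lambda
      intro e
      rcases eq_or_ne e a with rfl | hea
      · simpa [huf, Function.update_self] using measurable_const
      · have : (fun ω : ι → Bool => uf b ω e) = fun ω => ω e := by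
          funext ω; simp [huf, Function.update_of_ne hea]
        rw [this]; exact measurable_pi_apply e
    set At := uf true ⁻¹' A with hAt
    set Af := uf false ⁻¹' A with hAf
    set Bt := uf true ⁻¹' B with hBt
    set Bf := uf false ⁻¹' B with hBf
    have hmono : ∀ (C : Set (ι → Bool)) b, Incr C → SuppOn (insert a S) C →
        MeasurableSet C →
        Incr (uf b ⁻¹' C) ∧ SuppOn S (uf b ⁻¹' C) ∧ MeasurableSet (uf b ⁻¹' C) := by
      intro C b hiC hSC hmC
      refine ⟨?_, ?_, hmC.preimage (hufm b)⟩
      · intro ω ω' hle hω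
        refine hiC (fun e => ?_) hω
        rcases eq_or_ne e a with rfl | hea
        · simp [huf, Function.update_self]
        · simpa [huf, Function.update_of_ne hea] using hle e
      · intro ω ω' hag hω
        refine hSC (fun e he => ?_) hω
        rcases Finset.mem_insert.1 he with rfl | heS
        · simp [huf, Function.update_self]
        · have hea : e ≠ a := fun hea => ha (by rwa [← hea])
          simp only [huf, Function.update_of_ne hea]
          exact hag e heS
    obtain ⟨hiAt, hSAt, hmAt⟩ := hmono A true hiA hSA hmA
    obtain ⟨hiAf, hSAf, hmAf⟩ := hmono A false hiA hSA hmA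
    obtain ⟨hiBt, hSBt, hmBt⟩ := hmono B true hiB hSB hmB
    obtain ⟨hiBf, hSBf, hmBf⟩ := hmono B false hiB hSB hmB
    -- decomposition of measures
    have hdecomp : ∀ (C : Set (ι → Bool)), Incr C → SuppOn (insert a S) C →
        MeasurableSet C →
        μ C = wt p true * μ (uf true ⁻¹' C) + wt p false * μ (uf false ⁻¹' C) := by
      intro C hiC hSC hmC
      obtain ⟨_, hSCt, _⟩ := hmono C true hiC hSC hmC
      obtain ⟨_, hSCf, _⟩ := hmono C false hiC hSC hmC
      have hsplit : C = (uf true ⁻¹' C ∩ {ω | ω a = true})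
          ∪ (uf false ⁻¹' C ∩ {ω | ω a = false}) := by
        ext ω
        constructor
        · intro hω
          rcases Bool.eq_false_or_eq_true (ω a) with hb | hb
          · left
            refine ⟨?_, hb⟩
            show Function.update ω a true ∈ C
            rw [← hb, Function.update_eq_self]; exact hω
          · right
            refine ⟨?_, hb⟩
            show Function.update ω a false ∈ C
            rw [← hb, Function.update_eq_self]; exact hω
        · rintro (⟨h1, h2⟩ | ⟨h1, h2⟩)
          · have : Function.update ω a true = ω := by rw [← h2, Function.update_eq_self]
            rwa [← this]
          · have : Function.update ω a false = ω := by rw [← h2, Function.update_eq_self]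
            rwa [← this]
      have hdisj : Disjoint (uf true ⁻¹' C ∩ {ω | ω a = true})
          (uf false ⁻¹' C ∩ {ω | ω a = false}) := by
        refine Set.disjoint_left.2 ?_
        rintro ω ⟨_, h1⟩ ⟨_, h2⟩
        rw [Set.mem_setOf_eq] at h1 h2
        rw [h1] at h2; exact Bool.noConfusion h2
      conv_lhs => rw [hsplit]
      rw [measure_union hdisj
        ((hmC.preimage (hufm false)).inter (measurableSet_coord a false)),
        measure_inter_coord h hSCt ha true, measure_inter_coord h hSCf ha false]
    rw [hdecomp A hiA hSA hmA, hdecomp B hiB hSB hmB,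
      hdecomp (A ∩ B) (fun ω ω' hle hω => ⟨hiA hle hω.1, hiB hle hω.2⟩)
        (fun ω ω' hag hω => ⟨hSA hag hω.1, hSB hag hω.2⟩) (hmA.inter hmB)]
    have hABt : uf true ⁻¹' (A ∩ B) = At ∩ Bt := rfl
    have hABf : uf false ⁻¹' (A ∩ B) = Af ∩ Bf := rfl
    rw [hABt, hABf]
    -- numeric part
    have hAft : μ Af ≤ μ At := by
      apply measure_mono
      intro ω hω
      have : Function.update ω a false ≤ Function.update ω a true := by
        intro e
        rcases eq_or_ne e a with rfl | hea
        · simp [Function.update_self]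
        · simp [Function.update_of_ne hea, le_refl]
      exact hiA this hω
    have hBft : μ Bf ≤ μ Bt := by
      apply measure_mono
      intro ω hω
      have : Function.update ω a false ≤ Function.update ω a true := by
        intro e
        rcases eq_or_ne e a with rfl | hea
        · simp [Function.update_self]
        · simp [Function.update_of_ne hea, le_refl]
      exact hiB this hω
    have hIH1 : μ At * μ Bt ≤ μ (At ∩ Bt) := IH At Bt hmAt hmBt hiAt hiBt hSAt hSBt
    have hIH2 : μ Af * μ Bf ≤ μ (Af ∩ Bf) := IH Af Bf hmAf hmBf hiAf hiBf hSAf hSBf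
    set wT := wt p true
    set wF := wt p false
    have hw : wT + wF = 1 := wt_add hp
    calc (wT * μ At + wF * μ Af) * (wT * μ Bt + wF * μ Bf)
        = wT * wT * (μ At * μ Bt) + wF * wF * (μ Af * μ Bf)
          + wT * wF * (μ At * μ Bf + μ Af * μ Bt) := by ring
      _ ≤ wT * wT * (μ At * μ Bt) + wF * wF * (μ Af * μ Bf)
          + wT * wF * (μ At * μ Bt + μ Af * μ Bf) := by
          exact add_le_add_right (mul_le_mul_right (rearrange hAft hBft) _) _
      _ = (wT + wF) * (wT * (μ At * μ Bt) + wF * (μ Af * μ Bf)) := by ring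
      _ = wT * (μ At * μ Bt) + wF * (μ Af * μ Bf) := by rw [hw, one_mul]
      _ ≤ wT * μ (At ∩ Bt) + wF * μ (Af ∩ Bf) := by
          exact add_le_add (mul_le_mul_right hIH1 _) (mul_le_mul_right hIH2 _)


/-! ### Graph layer -/

section Graph
open SimpleGraph

variable {V : Type*} {G : SimpleGraph V} {p : ℝ} {μ : Measure (G.edgeSet → Bool)}

lemma IsBernoulli.isBern (h : IsBernoulli G p μ) : IsBern p μ := by
  intro S f
  rw [h S f]
  exact Finset.prod_congr rfl fun e _ => by cases f e <;> rfl

lemma openSubgraph_le (ω : G.edgeSet → Bool) : openSubgraph G ω ≤ G := by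
  intro a b hab
  rw [openSubgraph, SimpleGraph.fromEdgeSet_adj] at hab
  obtain ⟨⟨he, _⟩, _⟩ := hab
  exact (SimpleGraph.mem_edgeSet G).1 he

/-- the event that all edges of a `G`-walk are open -/
def openWalkEvent {x y : V} (w : G.Walk x y) : Set (G.edgeSet → Bool) :=
  {ω | ∀ e : G.edgeSet, ↑e ∈ w.edges → ω e = true}

lemma walk_transfer_mem {x y : V} (w : G.Walk x y) {ω : G.edgeSet → Bool}
    (hω : ω ∈ openWalkEvent w) : ∀ e ∈ w.edges, e ∈ (openSubgraph G ω).edgeSet := by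
  intro e he
  have heG : e ∈ G.edgeSet := w.edges_subset_edgeSet he
  rw [openSubgraph, SimpleGraph.edgeSet_fromEdgeSet]
  exact ⟨⟨heG, hω ⟨e, heG⟩ he⟩, G.not_isDiag_of_mem_edgeSet heG⟩

lemma openWalkEvent_subset_connEvent {x y : V} (w : G.Walk x y) :
    openWalkEvent w ⊆ connEvent G x y := fun ω hω =>
  (w.transfer (openSubgraph G ω) (walk_transfer_mem w hω)).reachable

lemma measurableSet_openWalkEvent {x y : V} (w : G.Walk x y) :
    MeasurableSet (openWalkEvent w) := by
  have : openWalkEvent w = ⋂ e ∈ {e : G.edgeSet | ↑e ∈ w.edges}, {ω | ω e = true} := by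
    ext ω; simp [openWalkEvent]
  rw [this]
  refine MeasurableSet.biInter ?_ fun e _ => measurableSet_coord e true
  exact Set.Countable.mono (fun e he => he)
    ((w.edges.finite_toSet.preimage (Subtype.val_injective.injOn)).countable)

/-- event: there is an open walk of length at most `r` -/
def cylEvent (G : SimpleGraph V) (x y : V) (r : ℕ) : Set (G.edgeSet → Bool) :=
  ⋃ w ∈ {w : G.Walk x y | w.length ≤ r}, openWalkEvent w

lemma cylEvent_mono (x y : V) : Monotone fun r => cylEvent G x y r := by
  intro r s hrs
  exact Set.iUnion₂_mono' fun w hw => ⟨w, le_trans hw hrs, le_rfl⟩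

lemma incr_cylEvent (x y : V) (r : ℕ) : Incr (cylEvent G x y r) := by
  rintro ω ω' hle hω
  simp only [cylEvent, Set.mem_iUnion] at hω ⊢
  obtain ⟨w, hw, hωw⟩ := hω
  refine ⟨w, hw, fun e he => ?_⟩
  have h1 := hle e
  rw [hωw e he] at h1
  exact le_antisymm (Bool.le_true _) h1

lemma connEvent_eq_iUnion (x y : V) :
    connEvent G x y = ⋃ r : ℕ, cylEvent G x y r := by
  ext ω
  constructor
  · intro hω
    obtain ⟨w₀⟩ := (hω : (openSubgraph G ω).Reachable x y)
    set w : G.Walk x y := w₀.mapLe (openSubgraph_le ω) with hw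
    have hedges : w.edges = w₀.edges := by
      rw [hw, SimpleGraph.Walk.mapLe, SimpleGraph.Walk.edges_map]
      have : Sym2.map ⇑(SimpleGraph.Hom.ofLE (openSubgraph_le ω)) = id := by
        funext e
        exact Sym2.map_id ▸ rfl
      rw [this, List.map_id]
    simp only [Set.mem_iUnion]
    refine ⟨w.length, Set.mem_biUnion (le_refl w.length) fun e he => ?_⟩
    rw [hedges] at he
    have h2 := w₀.edges_subset_edgeSet he
    rw [openSubgraph, SimpleGraph.edgeSet_fromEdgeSet] at h2
    obtain ⟨⟨he', hval⟩, _⟩ := h2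
    have : (⟨↑e, he'⟩ : G.edgeSet) = e := Subtype.ext rfl
    rwa [this] at hval
  · intro hω
    simp only [Set.mem_iUnion, cylEvent] at hω
    obtain ⟨r, w, _, hωw⟩ := hω
    exact openWalkEvent_subset_connEvent w hωw

lemma finite_walkSet (hlf : ∀ v : V, (G.neighborSet v).Finite) (x y : V) (r : ℕ) :
    {w : G.Walk x y | w.length ≤ r}.Finite := by
  haveI : DecidableEq V := Classical.decEq V
  haveI : ∀ v, Fintype (G.neighborSet v) := fun v => (hlf v).fintype
  have : {w : G.Walk x y | w.length ≤ r} = {w : G.Walk x y | w.length < r + 1} := by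
    ext w; simp [Nat.lt_succ_iff]
  rw [this]
  exact Set.toFinite _

lemma measurableSet_cylEvent (hlf : ∀ v : V, (G.neighborSet v).Finite) (x y : V) (r : ℕ) :
    MeasurableSet (cylEvent G x y r) :=
  MeasurableSet.biUnion (finite_walkSet hlf x y r).countable
    fun w _ => measurableSet_openWalkEvent w

lemma suppOn_cylEvent (hlf : ∀ v : V, (G.neighborSet v).Finite) (x y : V) (r : ℕ) :
    ∃ S : Finset G.edgeSet, SuppOn S (cylEvent G x y r) := by
  have hfin : (⋃ w ∈ {w : G.Walk x y | w.length ≤ r}, {e : G.edgeSet | ↑e ∈ w.edges}).Finite :=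
    Set.Finite.biUnion (finite_walkSet hlf x y r)
      (fun w _ => w.edges.finite_toSet.preimage (Subtype.val_injective.injOn))
  refine ⟨hfin.toFinset, ?_⟩
  intro ω ω' hag hω
  simp only [cylEvent, Set.mem_iUnion] at hω ⊢
  obtain ⟨w, hw, hωw⟩ := hω
  refine ⟨w, hw, fun e he => ?_⟩
  rw [← hag e (hfin.mem_toFinset.2 (Set.mem_biUnion hw he))]
  exact hωw e he

lemma suppOn_mono {ι : Type*} {S S' : Finset ι} {A : Set (ι → Bool)}
    (hSS : S ⊆ S') (h : SuppOn S A) : SuppOn S' A :=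
  fun ω ω' hag => h fun e he => hag e (hSS he)

/-- Harris inequality for connection events -/
lemma harris_conn (hμ : IsBernoulli G p μ) (hp : p ∈ Set.Icc (0:ℝ) 1)
    (hlf : ∀ v : V, (G.neighborSet v).Finite) (x y u v : V) :
    μ (connEvent G x y) * μ (connEvent G u v)
      ≤ μ (connEvent G x y ∩ connEvent G u v) := by
  have hA := connEvent_eq_iUnion (G := G) x y
  have hB := connEvent_eq_iUnion (G := G) u v
  have hAiSup : μ (connEvent G x y) = ⨆ r, μ (cylEvent G x y r) := by
    rw [hA]; exact Directed.measure_iUnion ((cylEvent_mono x y).directed_le)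
  have hBiSup : μ (connEvent G u v) = ⨆ r, μ (cylEvent G u v r) := by
    rw [hB]; exact Directed.measure_iUnion ((cylEvent_mono u v).directed_le)
  have hABiSup : μ (connEvent G x y ∩ connEvent G u v)
      = ⨆ r, μ (cylEvent G x y r ∩ cylEvent G u v r) := by
    rw [hA, hB, ← Set.iUnion_inter_of_monotone (cylEvent_mono x y) (cylEvent_mono u v)]
    exact Directed.measure_iUnion
      ((Monotone.directed_le fun r s hrs =>
        Set.inter_subset_inter (cylEvent_mono x y hrs) (cylEvent_mono u v hrs)))
  rw [hAiSup, hBiSup, hABiSup, ENNReal.iSup_mul]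
  refine iSup_le fun r => ?_
  rw [ENNReal.mul_iSup]
  refine iSup_le fun s => ?_
  set t := max r s
  obtain ⟨SA, hSA⟩ := suppOn_cylEvent hlf x y t
  obtain ⟨SB, hSB⟩ := suppOn_cylEvent hlf u v t
  calc μ (cylEvent G x y r) * μ (cylEvent G u v s)
      ≤ μ (cylEvent G x y t) * μ (cylEvent G u v t) :=
        mul_le_mul' (measure_mono (cylEvent_mono x y (le_max_left r s)))
          (measure_mono (cylEvent_mono u v (le_max_right r s)))
    _ ≤ μ (cylEvent G x y t ∩ cylEvent G u v t) :=
        harris_supported hμ.isBern hp (SA ∪ SB) _ _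
          (measurableSet_cylEvent hlf x y t) (measurableSet_cylEvent hlf u v t)
          (incr_cylEvent x y t) (incr_cylEvent u v t)
          (suppOn_mono Finset.subset_union_left hSA)
          (suppOn_mono Finset.subset_union_right hSB)
    _ ≤ ⨆ r, μ (cylEvent G x y r ∩ cylEvent G u v r) := le_iSup (fun r => μ (cylEvent G x y r ∩ cylEvent G u v r)) t

lemma connEvent_self (x : V) : connEvent G x x = Set.univ :=
  Set.eq_univ_of_forall fun ω => SimpleGraph.Reachable.refl x

lemma connEvent_trans (x y z : V) :
    connEvent G x y ∩ connEvent G y z ⊆ connEvent G x z :=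
  fun ω hω => SimpleGraph.Reachable.trans hω.1 hω.2

/-- lower bound on the connection probability -/
lemma pow_dist_le_measure_connEvent (hμ : IsBernoulli G p μ) (hp : p ∈ Set.Icc (0:ℝ) 1)
    (hc : G.Connected) (x y : V) :
    (ENNReal.ofReal p) ^ (G.dist x y) ≤ μ (connEvent G x y) := by
  obtain ⟨w, hw⟩ := hc.exists_walk_length_eq_dist x y
  have hfin : {e : G.edgeSet | ↑e ∈ w.edges}.Finite :=
    w.edges.finite_toSet.preimage (Subtype.val_injective.injOn)
  have hevent : openWalkEvent w = {ω | ∀ e ∈ hfin.toFinset, ω e = (fun _ => true) e} := by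
    ext ω
    simp [openWalkEvent, hfin.mem_toFinset]
  have hcard : hfin.toFinset.card ≤ G.dist x y := by
    rw [← hw, ← SimpleGraph.Walk.length_edges]
    have := Finset.card_le_card_of_injOn (f := fun e : G.edgeSet => (e : Sym2 V))
      (t := w.edges.toFinset) (s := hfin.toFinset)
      (fun e he => List.mem_toFinset.2 (hfin.mem_toFinset.1 he))
      (fun e _ e' _ hee => Subtype.ext hee)
    exact le_trans this w.edges.toFinset_card_le
  have hμw : μ (openWalkEvent w) = (ENNReal.ofReal p) ^ hfin.toFinset.card := by
    rw [hevent, hμ.isBern hfin.toFinset (fun _ => true)]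
    simp [wt, Finset.prod_const]
  calc (ENNReal.ofReal p) ^ (G.dist x y)
      ≤ (ENNReal.ofReal p) ^ hfin.toFinset.card :=
        pow_le_pow_right_of_le_one' (ENNReal.ofReal_le_one.2 hp.2) hcard
    _ = μ (openWalkEvent w) := hμw.symm
    _ ≤ μ (connEvent G x y) := measure_mono (openWalkEvent_subset_connEvent w)

end Graph

/-! ### distance and ball lemmas -/

section Graph2
open SimpleGraph

variable {V : Type*} {G : SimpleGraph V} {p : ℝ} {μ : Measure (G.edgeSet → Bool)}

lemma ball_finite (hc : G.Connected) (hlf : ∀ v : V, (G.neighborSet v).Finite) :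
    ∀ (r : ℕ) (x : V), (ball G x r).Finite := by
  intro r
  induction r with
  | zero =>
    intro x
    refine Set.Finite.subset (Set.finite_singleton x) fun z hz => ?_
    have h0 : G.dist x z = 0 := Nat.le_zero.1 hz
    exact Set.mem_singleton_iff.2 (hc.dist_eq_zero_iff.1 h0).symm
  | succ r IH =>
    intro x
    refine Set.Finite.subset
      ((Set.finite_singleton x).union (Set.Finite.biUnion (hlf x) (fun y _ => IH y)))
      fun z hz => ?_
    rcases eq_or_ne (G.dist x z) 0 with h0 | h0
    · exact Or.inl (Set.mem_singleton_iff.2 (hc.dist_eq_zero_iff.1 h0).symm)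
    · obtain ⟨w, hw⟩ := SimpleGraph.exists_walk_of_dist_ne_zero h0
      cases w with
      | nil => simp at h0
      | @cons _ x' _ h q =>
        refine Or.inr (Set.mem_biUnion (h : x' ∈ G.neighborSet x) ?_)
        have hq : q.length + 1 = G.dist x z := by simpa using hw
        have hzb : G.dist x z ≤ r + 1 := hz
        exact le_trans (SimpleGraph.dist_le q) (by omega)

lemma exists_mid (hconn : G.Connected) :
    ∀ (m : ℕ) (n : ℕ) (x z : V) (w : G.Walk x z), w.length ≤ m + n →
      ∃ y, G.dist x y ≤ m ∧ G.dist y z ≤ n := by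
  intro m
  induction m with
  | zero =>
    intro n x z w hw
    exact ⟨x, by simp [SimpleGraph.dist_self], le_trans (SimpleGraph.dist_le w) (by simpa using hw)⟩
  | succ m IH =>
    intro n x z w hw
    cases w with
    | nil => exact ⟨x, by simp [SimpleGraph.dist_self], by simp [SimpleGraph.dist_self]⟩
    | @cons _ x' _ h q =>
      obtain ⟨y, h1, h2⟩ := IH n x' z q (by simp only [SimpleGraph.Walk.length_cons] at hw; omega)
      refine ⟨y, ?_, h2⟩
      have ht := hconn.dist_triangle (u := x) (v := x') (w := y)
      have hxx' : G.dist x x' ≤ 1 := by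
        have := SimpleGraph.dist_le (SimpleGraph.Walk.cons h SimpleGraph.Walk.nil)
        simpa using this
      omega

lemma dist_le_of_mem_ball {x y : V} {n : ℕ} (h : y ∈ ball G x n) : G.dist x y ≤ n := h

lemma tau_nonneg (x y : V) : 0 ≤ tau G μ x y := ENNReal.toReal_nonneg

lemma tau_le_one (hμ : IsBernoulli G p μ) (x y : V) : tau G μ x y ≤ 1 := by
  have := hμ.isBern.le_one (connEvent G x y)
  calc (μ (connEvent G x y)).toReal ≤ (1 : ℝ≥0∞).toReal :=
    ENNReal.toReal_mono ENNReal.one_ne_top this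
  _ = 1 := by simp

lemma tau_self (hμ : IsBernoulli G p μ) (x : V) : tau G μ x x = 1 := by
  rw [tau, connEvent_self, hμ.isBern.measure_univ]; simp

lemma kappaSet_nonempty (hconn : G.Connected) (n : ℕ) :
    {t : ℝ | ∃ x y : V, G.dist x y ≤ n ∧ t = tau G μ x y}.Nonempty := by
  obtain ⟨x⟩ := hconn.nonempty
  exact ⟨tau G μ x x, x, x, by simp [SimpleGraph.dist_self], rfl⟩

lemma kappaSet_bddBelow (n : ℕ) :
    BddBelow {t : ℝ | ∃ x y : V, G.dist x y ≤ n ∧ t = tau G μ x y} :=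
  ⟨0, fun t ⟨x, y, _, ht⟩ => ht ▸ tau_nonneg x y⟩

lemma kappa_le_tau {x y : V} {n : ℕ} (h : G.dist x y ≤ n) : kappa G μ n ≤ tau G μ x y :=
  csInf_le (kappaSet_bddBelow n) ⟨x, y, h, rfl⟩

lemma kappa_nonneg (hconn : G.Connected) (n : ℕ) : 0 ≤ kappa G μ n :=
  le_csInf (kappaSet_nonempty hconn n) fun t ⟨x, y, _, ht⟩ => ht ▸ tau_nonneg x y

lemma kappa_le_one (hμ : IsBernoulli G p μ) (hconn : G.Connected) (n : ℕ) :
    kappa G μ n ≤ 1 := by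
  obtain ⟨x⟩ := hconn.nonempty
  exact le_trans (kappa_le_tau (by simp [SimpleGraph.dist_self])) (tau_le_one hμ x x)

lemma pow_dist_le_tau (hμ : IsBernoulli G p μ) (hp : p ∈ Set.Icc (0:ℝ) 1)
    (hconn : G.Connected) (x y : V) : p ^ (G.dist x y) ≤ tau G μ x y := by
  have h1 := pow_dist_le_measure_connEvent hμ hp hconn x y
  have h2 : ((ENNReal.ofReal p ^ G.dist x y)).toReal = p ^ G.dist x y := by
    rw [ENNReal.toReal_pow, ENNReal.toReal_ofReal hp.1]
  calc p ^ G.dist x y = ((ENNReal.ofReal p ^ G.dist x y)).toReal := h2.symm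
    _ ≤ tau G μ x y := ENNReal.toReal_mono (hμ.isBern.ne_top _) h1

lemma pow_le_kappa (hμ : IsBernoulli G p μ) (hp : p ∈ Set.Icc (0:ℝ) 1)
    (hconn : G.Connected) (n : ℕ) : p ^ n ≤ kappa G μ n := by
  refine le_csInf (kappaSet_nonempty hconn n) fun t ⟨x, y, hd, ht⟩ => ?_
  subst ht
  exact le_trans (pow_le_pow_of_le_one hp.1 hp.2 hd) (pow_dist_le_tau hμ hp hconn x y)

lemma tau_mul_tau_le (hμ : IsBernoulli G p μ) (hp : p ∈ Set.Icc (0:ℝ) 1)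
    (hlf : ∀ v : V, (G.neighborSet v).Finite) (x y z : V) :
    tau G μ x y * tau G μ y z ≤ tau G μ x z := by
  have h1 := harris_conn hμ hp hlf x y y z
  have h2 : μ (connEvent G x y ∩ connEvent G y z) ≤ μ (connEvent G x z) :=
    measure_mono (connEvent_trans x y z)
  rw [tau, tau, tau, ← ENNReal.toReal_mul]
  exact ENNReal.toReal_mono (hμ.isBern.ne_top _) (le_trans h1 h2)

lemma kappa_supermul (hμ : IsBernoulli G p μ) (hp : p ∈ Set.Icc (0:ℝ) 1)
    (hconn : G.Connected) (hlf : ∀ v : V, (G.neighborSet v).Finite) (m n : ℕ) :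
    kappa G μ m * kappa G μ n ≤ kappa G μ (m + n) := by
  refine le_csInf (kappaSet_nonempty hconn (m + n)) fun t ⟨x, z, hd, ht⟩ => ?_
  subst ht
  obtain ⟨w, hw⟩ := hconn.exists_walk_length_eq_dist x z
  obtain ⟨y, h1, h2⟩ := exists_mid hconn m n x z w (hw ▸ hd)
  calc kappa G μ m * kappa G μ n ≤ tau G μ x y * tau G μ y z :=
      mul_le_mul (kappa_le_tau h1) (kappa_le_tau h2) (kappa_nonneg hconn n)
        (tau_nonneg x y)
    _ ≤ tau G μ x z := tau_mul_tau_le hμ hp hlf x y z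

end Graph2

section Graph3
open SimpleGraph

variable {V : Type*} {G : SimpleGraph V} {p : ℝ} {μ : Measure (G.edgeSet → Bool)}

/-- summability at one vertex transfers to all vertices when `p > 0` -/
lemma tsum_connEvent_ne_top (hμ : IsBernoulli G p μ) (hp : p ∈ Set.Icc (0:ℝ) 1)
    (hppos : 0 < p) (hconn : G.Connected) (hlf : ∀ v : V, (G.neighborSet v).Finite)
    {ρ : V} (hsum : ∑' z : V, μ (connEvent G ρ z) ≠ ⊤) (x : V) :
    ∑' z : V, μ (connEvent G x z) ≠ ⊤ := by
  have hne0 : μ (connEvent G ρ x) ≠ 0 := by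
    refine fun h0 => ?_
    have h1 := pow_dist_le_measure_connEvent hμ hp hconn ρ x
    rw [h0, le_zero_iff] at h1
    exact pow_ne_zero _ (ne_of_gt (ENNReal.ofReal_pos.2 hppos)) h1
  have hbound : ∀ z, μ (connEvent G x z)
      ≤ μ (connEvent G ρ z) * (μ (connEvent G ρ x))⁻¹ := by
    intro z
    rw [← div_eq_mul_inv,
      ENNReal.le_div_iff_mul_le (Or.inl hne0) (Or.inl (hμ.isBern.ne_top _))]
    calc μ (connEvent G x z) * μ (connEvent G ρ x)
        = μ (connEvent G ρ x) * μ (connEvent G x z) := mul_comm _ _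
      _ ≤ μ (connEvent G ρ x ∩ connEvent G x z) := harris_conn hμ hp hlf ρ x x z
      _ ≤ μ (connEvent G ρ z) := measure_mono (connEvent_trans ρ x z)
  have h2 : ∑' z : V, μ (connEvent G x z)
      ≤ (∑' z : V, μ (connEvent G ρ z)) * (μ (connEvent G ρ x))⁻¹ := by
    rw [← ENNReal.tsum_mul_right]
    exact ENNReal.tsum_le_tsum hbound
  exact ne_top_of_le_ne_top
    (ENNReal.mul_ne_top hsum (ENNReal.inv_ne_top.2 hne0)) h2

lemma kappa_mul_ncard_le (hμ : IsBernoulli G p μ) (hconn : G.Connected)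
    (hlf : ∀ v : V, (G.neighborSet v).Finite) (x : V) (n : ℕ)
    (hx : ∑' z : V, μ (connEvent G x z) ≠ ⊤) :
    kappa G μ n * ((ball G x n).ncard : ℝ) ≤ (∑' z : V, μ (connEvent G x z)).toReal := by
  have hfin := ball_finite hconn hlf n x
  have hcard : ((ball G x n).ncard : ℝ) = (hfin.toFinset.card : ℝ) := by
    rw [Set.ncard_eq_toFinset_card _ hfin]
  calc kappa G μ n * ((ball G x n).ncard : ℝ)
      = ∑ _y ∈ hfin.toFinset, kappa G μ n := by
        rw [Finset.sum_const, nsmul_eq_mul, mul_comm, hcard]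
    _ ≤ ∑ y ∈ hfin.toFinset, tau G μ x y := by
        refine Finset.sum_le_sum fun y hy => ?_
        exact kappa_le_tau (dist_le_of_mem_ball (hfin.mem_toFinset.1 hy))
    _ = (∑ y ∈ hfin.toFinset, μ (connEvent G x y)).toReal :=
        (ENNReal.toReal_sum fun y _ => hμ.isBern.ne_top _).symm
    _ ≤ (∑' z : V, μ (connEvent G x z)).toReal :=
        ENNReal.toReal_mono hx (ENNReal.sum_le_tsum hfin.toFinset)

lemma one_le_C (hμ : IsBernoulli G p μ)
    (x : V) (hx : ∑' z : V, μ (connEvent G x z) ≠ ⊤) :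
    1 ≤ (∑' z : V, μ (connEvent G x z)).toReal := by
  have h1 : (1 : ℝ≥0∞) ≤ ∑' z : V, μ (connEvent G x z) := by
    calc (1 : ℝ≥0∞) = μ (connEvent G x x) := by
          rw [connEvent_self, hμ.isBern.measure_univ]
      _ ≤ ∑' z : V, μ (connEvent G x z) := ENNReal.le_tsum x
  calc (1:ℝ) = (1 : ℝ≥0∞).toReal := by simp
    _ ≤ _ := ENNReal.toReal_mono hx h1

lemma one_le_ballRoot (hconn : G.Connected) (hlf : ∀ v : V, (G.neighborSet v).Finite)
    (x : V) (n : ℕ) : 1 ≤ ((ball G x n).ncard : ℝ) ^ ((n:ℝ)⁻¹) := by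
  have hfin := ball_finite hconn hlf n x
  have hne : (ball G x n).Nonempty := ⟨x, by simp [ball, SimpleGraph.dist_self]⟩
  have hpos : 0 < (ball G x n).ncard := (Set.ncard_pos hfin).2 hne
  have h1 : (1:ℝ) ≤ ((ball G x n).ncard : ℝ) := by exact_mod_cast hpos
  exact Real.one_le_rpow h1 (by positivity)

lemma growth_nonneg {x : V} : 0 ≤ Filter.liminf
    (fun r : ℕ => ((ball G x r).ncard : ℝ) ^ ((r : ℝ)⁻¹)) Filter.atTop := by
  rw [Filter.liminf_eq]
  by_cases hb : BddAbove {a : ℝ | ∀ᶠ n in Filter.atTop, a ≤ ((ball G x n).ncard : ℝ) ^ ((n : ℝ)⁻¹)}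
  · exact le_csSup hb (Filter.Eventually.of_forall fun r => by positivity)
  · rw [Real.sSup_of_not_bddAbove hb]

end Graph3

section Degenerate
open SimpleGraph

variable {V : Type*} {G : SimpleGraph V} {p : ℝ} {μ : Measure (G.edgeSet → Bool)}

lemma kappa_subsingleton [Subsingleton V] (hμ : IsBernoulli G p μ) (hconn : G.Connected)
    (n : ℕ) : kappa G μ n = 1 := by
  obtain ⟨ρ⟩ := hconn.nonempty
  have hset : {t : ℝ | ∃ x y : V, G.dist x y ≤ n ∧ t = tau G μ x y} = {1} := by
    ext t
    constructor
    · rintro ⟨x, y, _, rfl⟩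
      have : y = x := Subsingleton.elim y x
      subst this
      simp [tau_self hμ]
    · rintro rfl
      exact ⟨ρ, ρ, by simp [SimpleGraph.dist_self], (tau_self hμ ρ).symm⟩
  rw [kappa, hset, csInf_singleton]

lemma main_subsingleton [Subsingleton V] (hμ : IsBernoulli G p μ) (hconn : G.Connected) :
    Filter.Tendsto (fun n : ℕ => kappa G μ n ^ ((n : ℝ)⁻¹)) Filter.atTop
        (𝓝 (supKappaRoot G μ)) ∧
      ∀ x : V, supKappaRoot G μ ≤ (growth G x)⁻¹ := by
  have hfun : (fun n : ℕ => kappa G μ n ^ ((n : ℝ)⁻¹)) = fun _ => (1:ℝ) := by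
    funext n
    rw [kappa_subsingleton hμ hconn, Real.one_rpow]
  have hsup : supKappaRoot G μ = 1 := by
    rw [supKappaRoot]
    have : {t : ℝ | ∃ n : ℕ, 1 ≤ n ∧ t = kappa G μ n ^ ((n : ℝ)⁻¹)} = {1} := by
      ext t
      constructor
      · rintro ⟨n, hn, rfl⟩
        rw [kappa_subsingleton hμ hconn, Real.one_rpow]; rfl
      · rintro rfl
        exact ⟨1, le_rfl, by rw [kappa_subsingleton hμ hconn, Real.one_rpow]⟩
    rw [this, csSup_singleton]
  constructor
  · rw [hsup, hfun]
    exact tendsto_const_nhds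
  · intro x
    have hball : ∀ r : ℕ, ball G x r = {x} := by
      intro r
      ext y
      simp only [ball, Set.mem_setOf_eq, Set.mem_singleton_iff]
      constructor
      · intro _; exact Subsingleton.elim y x
      · rintro rfl; simp [SimpleGraph.dist_self]
    have hgrowth : growth G x = 1 := by
      rw [growth]
      have : (fun r : ℕ => ((ball G x r).ncard : ℝ) ^ ((r : ℝ)⁻¹)) = fun _ => (1:ℝ) := by
        funext r
        rw [hball r, Set.ncard_singleton]
        simp
      rw [this, Filter.liminf_const]
    rw [hsup, hgrowth]
    norm_num

lemma exists_adj (hconn : G.Connected) [Nontrivial V] : ∃ a b : V, G.Adj a b := by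
  obtain ⟨a, b, hab⟩ := exists_pair_ne V
  have hd : G.dist a b ≠ 0 :=
    SimpleGraph.dist_ne_zero_iff_ne_and_reachable.2 ⟨hab, hconn a b⟩
  obtain ⟨w, hw⟩ := SimpleGraph.exists_walk_of_dist_ne_zero hd
  cases w with
  | nil => rw [← hw] at hd; simp at hd
  | cons h q => exact ⟨_, _, h⟩

lemma tau_adj_eq_zero (hμ : IsBernoulli G p μ) (hp0 : p = 0)
    (hlf : ∀ v : V, (G.neighborSet v).Finite) {a b : V} (hab : G.Adj a b) :
    tau G μ a b = 0 := by
  have hzero : ∀ z ∈ G.neighborSet a, μ {ω : G.edgeSet → Bool |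
      ∃ he : s(a, z) ∈ G.edgeSet, ω ⟨s(a, z), he⟩ = true} = 0 := by
    intro z hz
    have he : s(a, z) ∈ G.edgeSet := (G.mem_edgeSet).2 hz
    have hset : {ω : G.edgeSet → Bool | ∃ he' : s(a, z) ∈ G.edgeSet, ω ⟨s(a, z), he'⟩ = true}
        = {ω : G.edgeSet → Bool |
            ∀ e ∈ ({⟨s(a,z), he⟩} : Finset G.edgeSet), ω e = (fun _ => true) e} := by
      ext ω
      simp only [Set.mem_setOf_eq, Finset.mem_singleton, forall_eq]
      exact ⟨fun ⟨he', h⟩ => h, fun h => ⟨he, h⟩⟩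
    rw [hset, hμ.isBern {⟨s(a,z), he⟩} (fun _ => true)]
    simp [wt, hp0]
  have hsub : connEvent G a b
      ⊆ ⋃ z ∈ G.neighborSet a, {ω : G.edgeSet → Bool |
          ∃ he : s(a, z) ∈ G.edgeSet, ω ⟨s(a, z), he⟩ = true} := by
    intro ω hω
    obtain ⟨w₀⟩ := (hω : (openSubgraph G ω).Reachable a b)
    cases w₀ with
    | nil => exact absurd rfl hab.ne
    | @cons _ z _ hadj q =>
      rw [openSubgraph, SimpleGraph.fromEdgeSet_adj] at hadj
      obtain ⟨⟨he, hval⟩, _⟩ := hadj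
      exact Set.mem_biUnion ((G.mem_edgeSet).1 he) ⟨he, hval⟩
  have hnull : μ (connEvent G a b) = 0 :=
    measure_mono_null hsub ((measure_biUnion_null_iff (hlf a).countable).2 hzero)
  rw [tau, hnull]
  simp

lemma kappa_eq_zero (hμ : IsBernoulli G p μ) (hp0 : p = 0) (hconn : G.Connected)
    (hlf : ∀ v : V, (G.neighborSet v).Finite) [Nontrivial V] {n : ℕ} (hn : 1 ≤ n) :
    kappa G μ n = 0 := by
  obtain ⟨a, b, hab⟩ := exists_adj hconn
  have hd : G.dist a b ≤ n := by
    have h1 : G.dist a b ≤ 1 := by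
      have := SimpleGraph.dist_le (SimpleGraph.Walk.cons hab SimpleGraph.Walk.nil)
      simpa using this
    omega
  refine le_antisymm ?_ (kappa_nonneg hconn n)
  exact csInf_le (kappaSet_bddBelow n) ⟨a, b, hd, (tau_adj_eq_zero hμ hp0 hlf hab).symm⟩

lemma main_p_zero (hμ : IsBernoulli G p μ) (hp0 : p = 0) (hconn : G.Connected)
    (hlf : ∀ v : V, (G.neighborSet v).Finite) [Nontrivial V] :
    Filter.Tendsto (fun n : ℕ => kappa G μ n ^ ((n : ℝ)⁻¹)) Filter.atTop
        (𝓝 (supKappaRoot G μ)) ∧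
      ∀ x : V, supKappaRoot G μ ≤ (growth G x)⁻¹ := by
  have hval : ∀ n : ℕ, 1 ≤ n → kappa G μ n ^ ((n : ℝ)⁻¹) = 0 := by
    intro n hn
    rw [kappa_eq_zero hμ hp0 hconn hlf hn]
    exact Real.zero_rpow (by positivity)
  have hsup : supKappaRoot G μ = 0 := by
    rw [supKappaRoot]
    have : {t : ℝ | ∃ n : ℕ, 1 ≤ n ∧ t = kappa G μ n ^ ((n : ℝ)⁻¹)} = {0} := by
      ext t
      constructor
      · rintro ⟨n, hn, rfl⟩
        exact hval n hn
      · rintro rfl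
        exact ⟨1, le_rfl, (hval 1 le_rfl).symm⟩
    rw [this, csSup_singleton]
  refine ⟨?_, fun x => ?_⟩
  · rw [hsup]
    refine Filter.Tendsto.congr' ?_ tendsto_const_nhds
    filter_upwards [Filter.eventually_ge_atTop 1] with n hn
    exact (hval n hn).symm
  · rw [hsup]
    exact inv_nonneg.2 growth_nonneg

end Degenerate

section MainPos
open SimpleGraph

variable {V : Type*} {G : SimpleGraph V} {p : ℝ} {μ : Measure (G.edgeSet → Bool)}

lemma main_p_pos (hμ : IsBernoulli G p μ) (hp : p ∈ Set.Icc (0:ℝ) 1) (hppos : 0 < p)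
    (hconn : G.Connected) (hlf : ∀ v : V, (G.neighborSet v).Finite)
    {ρ : V} (hsum : ∑' z : V, μ (connEvent G ρ z) ≠ ⊤) :
    Filter.Tendsto (fun n : ℕ => kappa G μ n ^ ((n : ℝ)⁻¹)) Filter.atTop
        (𝓝 (supKappaRoot G μ)) ∧
      ∀ x : V, supKappaRoot G μ ≤ (growth G x)⁻¹ := by
  have hκpos : ∀ n, 0 < kappa G μ n := fun n =>
    lt_of_lt_of_le (pow_pos hppos n) (pow_le_kappa hμ hp hconn n)
  have hκ1 : ∀ n, kappa G μ n ≤ 1 := kappa_le_one hμ hconn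
  set u : ℕ → ℝ := fun n => -Real.log (kappa G μ n) with hu
  have husub : Subadditive u := by
    intro m n
    have h1 : kappa G μ m * kappa G μ n ≤ kappa G μ (m+n) := kappa_supermul hμ hp hconn hlf m n
    have h2 := Real.log_le_log (mul_pos (hκpos m) (hκpos n)) h1
    rw [Real.log_mul (ne_of_gt (hκpos m)) (ne_of_gt (hκpos n))] at h2
    simp only [hu]
    linarith
  have hunn : ∀ n, 0 ≤ u n := fun n => by
    simp only [hu]
    have := Real.log_nonpos (le_of_lt (hκpos n)) (hκ1 n)
    linarith
  have hbdd : BddBelow (Set.range fun n : ℕ => u n / n) := by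
    refine ⟨0, ?_⟩
    rintro t ⟨n, rfl⟩
    exact div_nonneg (hunn n) (Nat.cast_nonneg n)
  have htend0 := husub.tendsto_lim hbdd
  have hroot : ∀ n : ℕ, 1 ≤ n → kappa G μ n ^ ((n:ℝ)⁻¹) = Real.exp (-(u n / n)) := by
    intro n hn
    rw [Real.rpow_def_of_pos (hκpos n)]
    congr 1
    simp only [hu]
    have hn0 : (n:ℝ) ≠ 0 := by positivity
    field_simp
  set L := Real.exp (-husub.lim) with hL
  have htend : Filter.Tendsto (fun n : ℕ => kappa G μ n ^ ((n : ℝ)⁻¹)) Filter.atTop (𝓝 L) := by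
    have h1 : Filter.Tendsto (fun n : ℕ => Real.exp (-(u n / n))) Filter.atTop (𝓝 L) :=
      (Real.continuous_exp.tendsto _).comp htend0.neg
    refine h1.congr' ?_
    filter_upwards [Filter.eventually_ge_atTop 1] with n hn
    exact (hroot n hn).symm
  have hsupeq : supKappaRoot G μ = L := by
    rw [supKappaRoot]
    have hset : {t : ℝ | ∃ n : ℕ, 1 ≤ n ∧ t = kappa G μ n ^ ((n : ℝ)⁻¹)}
        = (fun s : ℝ => Real.exp (-s)) '' ((fun n : ℕ => u n / n) '' Set.Ici 1) := by
      ext t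
      simp only [Set.mem_image, Set.mem_setOf_eq, Set.mem_Ici]
      constructor
      · rintro ⟨n, hn, rfl⟩
        exact ⟨u n / n, ⟨n, hn, rfl⟩, (hroot n hn).symm⟩
      · rintro ⟨s, ⟨n, hn, rfl⟩, rfl⟩
        exact ⟨n, hn, (hroot n hn).symm⟩
    have hmap : (fun s : ℝ => Real.exp (-s)) (sInf ((fun n : ℕ => u n / n) '' Set.Ici 1))
        = sSup ((fun s : ℝ => Real.exp (-s)) '' ((fun n : ℕ => u n / n) '' Set.Ici 1)) :=
      Antitone.map_csInf_of_continuousAt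
        (Continuous.continuousAt (by continuity))
        (fun s t hst => Real.exp_le_exp.2 (neg_le_neg hst))
        ⟨u 1 / (1:ℕ), Set.mem_image_of_mem (fun n : ℕ => u n / n) (Set.mem_Ici.2 le_rfl)⟩
        (BddBelow.mono (Set.image_subset_range (fun n : ℕ => u n / n) (Set.Ici 1)) hbdd)
    rw [hset, ← hmap, hL, Subadditive.lim]
  refine ⟨hsupeq ▸ htend, fun x => ?_⟩
  have hLpos : 0 < L := Real.exp_pos _
  have hxsum := tsum_connEvent_ne_top hμ hp hppos hconn hlf hsum x
  set C := (∑' z : V, μ (connEvent G x z)).toReal with hC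
  have hC1 : 1 ≤ C := one_le_C hμ x hxsum
  set b : ℕ → ℝ := fun n => ((ball G x n).ncard : ℝ) ^ ((n:ℝ)⁻¹) with hb
  have hb1 : ∀ n, 1 ≤ b n := fun n => one_le_ballRoot hconn hlf x n
  have hkey : ∀ n : ℕ, b n ≤ C ^ ((n:ℝ)⁻¹) / kappa G μ n ^ ((n:ℝ)⁻¹) := by
    intro n
    have h1 : ((ball G x n).ncard : ℝ) ≤ C / kappa G μ n := by
      rw [le_div_iff₀ (hκpos n)]
      have h2 := kappa_mul_ncard_le hμ hconn hlf x n hxsum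
      rw [← hC] at h2
      linarith
    have h2 : ((ball G x n).ncard : ℝ) ^ ((n:ℝ)⁻¹) ≤ (C / kappa G μ n) ^ ((n:ℝ)⁻¹) :=
      Real.rpow_le_rpow (Nat.cast_nonneg _) h1 (by positivity)
    rwa [Real.div_rpow (by linarith) (le_of_lt (hκpos n))] at h2
  have hCpos : (0:ℝ) < C := by linarith
  have hCt : Filter.Tendsto (fun n : ℕ => C ^ ((n:ℝ)⁻¹)) Filter.atTop (𝓝 1) := by
    have hinv : Filter.Tendsto (fun n : ℕ => ((n:ℝ)⁻¹)) Filter.atTop (𝓝 0) :=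
      tendsto_inv_atTop_zero.comp tendsto_natCast_atTop_atTop
    have hmul : Filter.Tendsto (fun n : ℕ => Real.log C * (n:ℝ)⁻¹) Filter.atTop (𝓝 0) := by
      simpa using hinv.const_mul (Real.log C)
    have hexp : Filter.Tendsto (fun n : ℕ => Real.exp (Real.log C * (n:ℝ)⁻¹))
        Filter.atTop (𝓝 1) := by
      simpa [Function.comp_def] using (Real.continuous_exp.tendsto 0).comp hmul
    exact hexp.congr fun n => (Real.rpow_def_of_pos hCpos _).symm
  have hRHS : Filter.Tendsto (fun n : ℕ => C ^ ((n:ℝ)⁻¹) / kappa G μ n ^ ((n:ℝ)⁻¹))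
      Filter.atTop (𝓝 (1 / L)) := hCt.div htend (ne_of_gt hLpos)
  have hbBdd : Filter.IsBoundedUnder (· ≥ ·) Filter.atTop b :=
    Filter.isBoundedUnder_of ⟨1, fun n => hb1 n⟩
  have hbub : Filter.IsBoundedUnder (· ≤ ·) Filter.atTop b :=
    (hRHS.isBoundedUnder_le).mono_le (Filter.Eventually.of_forall hkey)
  have h3 : Filter.liminf b Filter.atTop ≤ 1 / L := by
    have h4 := Filter.liminf_le_liminf (Filter.Eventually.of_forall hkey) hbBdd
      (hRHS.isBoundedUnder_le.isCoboundedUnder_ge)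
    rwa [hRHS.liminf_eq] at h4
  have h5 : (1:ℝ) ≤ Filter.liminf b Filter.atTop :=
    Filter.le_liminf_of_le hbub.isCoboundedUnder_ge (Filter.Eventually.of_forall hb1)
  have hfinal : L ≤ (Filter.liminf b Filter.atTop)⁻¹ := by
    have h6 : Filter.liminf b Filter.atTop ≤ L⁻¹ := by rwa [one_div] at h3
    calc L = (L⁻¹)⁻¹ := (inv_inv L).symm
      _ ≤ (Filter.liminf b Filter.atTop)⁻¹ :=
        inv_anti₀ (lt_of_lt_of_le zero_lt_one h5) h6
  rw [hsupeq]
  exact hfinal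

end MainPos


end Aux

/-- On a connected, locally finite, quasi-transitive graph, if the
expected cluster size `Σ_x τ_p(ρ,x)` is finite, then
`sup_{n ≥ 1} κ_p(n)^{1/n} = lim_{n→∞} κ_p(n)^{1/n} ≤ gr(G)⁻¹`. -/
theorem supKappaRoot_eq_lim_le_growth_inv
    {V : Type*} (G : SimpleGraph V)
    (hconn : G.Connected) (hlf : ∀ v : V, (G.neighborSet v).Finite)
    (hqt : QuasiTransitive G)
    (ρ : V) (p : ℝ) (hp : p ∈ Set.Icc (0:ℝ) 1)
    (μ : Measure (G.edgeSet → Bool)) (hμ : IsBernoulli G p μ)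
    (hsum : ∑' x : V, μ (connEvent G ρ x) ≠ ⊤) :
    Filter.Tendsto (fun n : ℕ => kappa G μ n ^ ((n : ℝ)⁻¹)) Filter.atTop
        (𝓝 (supKappaRoot G μ)) ∧
      ∀ x : V, supKappaRoot G μ ≤ (growth G x)⁻¹ := by
  rcases subsingleton_or_nontrivial V with hV | hV
  · exact main_subsingleton hμ hconn
  · rcases eq_or_lt_of_le hp.1 with hp0 | hppos
    · exact main_p_zero hμ hp0.symm hconn hlf
    · exact main_p_pos hμ hp hppos hconn hlf hsum

end BernoulliPercolation
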